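/- Let (p,q) ∈ ℕ^m × ℕ^n and let r = bar q be the count vector of q. Then the number of binary matrices with margins (p,q) satisfies N(p,q) = Σ_{s ∈ C^r(p_1)} (r choose s) · N((p_2,...,p_m), q_s), where for each s ∈ C^r(p_1), q_s denotes any finite nonnegative integer vector whose count vector equals r ⊖ s (such a vector exists since r ⊖ s has nonnegative entries and finite support, and the value N((p_2,...,p_m), q_s) does not depend on the choice of q_s). -/

import Mathlib

open scoped BigOperators

/-- `countVec q k` is the number of entries of `q` equal to `k + 1`; i.e. it represents the
count vector `bar q = (bar q_1, bar q_2, ...)` in 0-based indexing (index `k` ↦ value `k+1`). -/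
def countVec {n : ℕ} (q : Fin n → ℕ) (k : ℕ) : ℕ :=
  (Finset.univ.filter fun j => q j = k + 1).card

/-- `binN m n p q` is the number of `m × n` matrices with entries in `{0,1}` whose
`i`-th row sum is `p i` and whose `j`-th column sum is `q j`. -/
noncomputable def binN (m n : ℕ) (p : Fin m → ℕ) (q : Fin n → ℕ) : ℕ :=
  Nat.card {A : Fin m → Fin n → ℕ // (∀ i j, A i j ≤ 1) ∧
    (∀ i, ∑ j, A i j = p i) ∧ (∀ j, ∑ i, A i j = q j)}

/-- Recursion for the number of binary matrices with margins `(p, q)`: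
`N(p,q) = Σ_{s ∈ C^r(p_1)} (r choose s) · N((p_2,...,p_m), q_s)` where `r = bar q` and for each
`s`, `q_s` (here `qs s`, of length `ns s`) is any vector whose count vector is `r ⊖ s`.
Sequences in `ℕ^∞` are 0-based here: index `k` stands for position `k+1`. -/
instance binN_finite (m n : ℕ) (p : Fin m → ℕ) (q : Fin n → ℕ) :
    Finite {A : Fin m → Fin n → ℕ // (∀ i j, A i j ≤ 1) ∧
      (∀ i, ∑ j, A i j = p i) ∧ (∀ j, ∑ i, A i j = q j)} := by
  apply Finite.of_injective
    (fun A => (fun i j => (⟨A.1 i j, Nat.lt_succ_of_le (A.2.1 i j)⟩ : Fin 2) : Fin m → Fin n → Fin 2))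
  intro A B h
  ext i j
  have := congrFun (congrFun h i) j
  simpa [Fin.ext_iff] using this

lemma nat_card_sigma {ι : Type*} [Fintype ι] (f : ι → Type*) [∀ i, Finite (f i)] :
    Nat.card (Σ i, f i) = ∑ i, Nat.card (f i) := by
  letI : ∀ i, Fintype (f i) := fun i => Fintype.ofFinite _
  simp [Nat.card_eq_fintype_card, Fintype.card_sigma]

lemma col_zero {m n : ℕ} (A : Fin m → Fin n → ℕ) (j : Fin n) (h : ∑ i, A i j = 0) (i : Fin m) :
    A i j = 0 :=
  Finset.sum_eq_zero_iff.1 h i (Finset.mem_univ i)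

def fiberSigma {N : ℕ} (Q : Fin N → ℕ) :
    {j : Fin N // Q j ≠ 0} ≃ Σ k : ℕ, {j : Fin N // Q j = k + 1} where
  toFun j := ⟨Q j.1 - 1, j.1, by omega⟩
  invFun x := ⟨x.2.1, by have := x.2.2; omega⟩
  left_inv j := rfl
  right_inv := by
    rintro ⟨k, j, hj⟩
    obtain rfl : k = Q j - 1 := by omega
    rfl

noncomputable def colEquiv {n n' : ℕ} (q : Fin n → ℕ) (q' : Fin n' → ℕ)
    (h : ∀ k, countVec q k = countVec q' k) :
    {j : Fin n // q j ≠ 0} ≃ {j : Fin n' // q' j ≠ 0} := by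
  classical
  refine (fiberSigma q).trans ((Equiv.sigmaCongrRight fun k => ?_).trans (fiberSigma q').symm)
  apply Fintype.equivOfCardEq
  simpa [Fintype.card_subtype, countVec] using h k

lemma colEquiv_val {n n' : ℕ} (q : Fin n → ℕ) (q' : Fin n' → ℕ)
    (h : ∀ k, countVec q k = countVec q' k) (j : {j : Fin n // q j ≠ 0}) :
    q' ((colEquiv q q' h j).1) = q j.1 := by
  classical
  have h1 : q j.1 ≠ 0 := j.2
  show q' (((fiberSigma q').symm (Equiv.sigmaCongrRight _ ((fiberSigma q) j))).1 : Fin n') = q j.1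
  set x := Equiv.sigmaCongrRight _ ((fiberSigma q) j) with hx
  have hfst : x.1 = q j.1 - 1 := rfl
  have : q' (((fiberSigma q').symm x).1 : Fin n') = x.1 + 1 := x.2.2
  rw [this, hfst]
  omega
lemma rowsum_aux {n n' : ℕ} (q : Fin n → ℕ) (q' : Fin n' → ℕ)
    (e : {j : Fin n // q j ≠ 0} ≃ {j : Fin n' // q' j ≠ 0}) (f : Fin n → ℕ)
    (hf : ∀ j, q j = 0 → f j = 0) :
    ∑ j', (if hj : q' j' ≠ 0 then f (e.symm ⟨j', hj⟩).1 else 0) = ∑ j, f j := by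
  classical
  rw [← Finset.sum_filter_add_sum_filter_not Finset.univ (fun j' => q' j' ≠ 0)]
  have h2 : ∑ j' ∈ Finset.univ.filter (fun j' => ¬ q' j' ≠ 0),
      (if hj : q' j' ≠ 0 then f (e.symm ⟨j', hj⟩).1 else 0) = 0 := by
    apply Finset.sum_eq_zero
    intro j' hj'
    rw [dif_neg (Finset.mem_filter.1 hj').2]
  rw [h2, add_zero]
  rw [Finset.sum_subtype (p := fun j' => q' j' ≠ 0) (Finset.univ.filter (fun j' => q' j' ≠ 0))
    (by intro x; simp) (fun j' => if hj : q' j' ≠ 0 then f (e.symm ⟨j', hj⟩).1 else 0)]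
  have h3 : ∀ a : {j : Fin n' // q' j ≠ 0},
      (if hj : q' a.1 ≠ 0 then f (e.symm ⟨a.1, hj⟩).1 else 0) = f (e.symm a).1 := by
    intro a; rw [dif_pos a.2]
  rw [Finset.sum_congr rfl (fun a _ => h3 a)]
  rw [Equiv.sum_comp e.symm (fun a => f a.1)]
  rw [← Finset.sum_subtype (p := fun j => q j ≠ 0) (Finset.univ.filter (fun j => q j ≠ 0)) (by intro x; simp) (fun j => f j)]
  rw [← Finset.sum_filter_add_sum_filter_not Finset.univ (fun j => q j ≠ 0) f]
  have h4 : ∑ j ∈ Finset.univ.filter (fun j => ¬ q j ≠ 0), f j = 0 := by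
    apply Finset.sum_eq_zero
    intro j hj
    exact hf j (not_not.1 (Finset.mem_filter.1 hj).2)
  omega

lemma binN_congr {m n n' : ℕ} (p : Fin m → ℕ) (q : Fin n → ℕ) (q' : Fin n' → ℕ)
    (h : ∀ k, countVec q k = countVec q' k) : binN m n p q = binN m n' p q' := by
  classical
  apply Nat.card_congr
  set e := colEquiv q q' h with he
  have hevq : ∀ j, q' ((e j).1) = q j.1 := fun j => colEquiv_val q q' h j
  have hevq' : ∀ j', q ((e.symm j').1) = q' j'.1 := by
    intro j'; rw [← hevq (e.symm j'), Equiv.apply_symm_apply]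
  have hzero : ∀ (A : {A : Fin (m) → Fin n → ℕ // (∀ i j, A i j ≤ 1) ∧
      (∀ i, ∑ j, A i j = p i) ∧ (∀ j, ∑ i, A i j = q j)}) (j : Fin n), q j = 0 → ∀ i, A.1 i j = 0 := by
    intro A j hj i
    exact col_zero A.1 j (by rw [A.2.2.2 j, hj]) i
  have hzero' : ∀ (A : {A : Fin (m) → Fin n' → ℕ // (∀ i j, A i j ≤ 1) ∧
      (∀ i, ∑ j, A i j = p i) ∧ (∀ j, ∑ i, A i j = q' j)}) (j : Fin n'), q' j = 0 → ∀ i, A.1 i j = 0 := by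
    intro A j hj i
    exact col_zero A.1 j (by rw [A.2.2.2 j, hj]) i
  refine
    { toFun := fun A => ⟨fun i j' => if hj : q' j' ≠ 0 then A.1 i (e.symm ⟨j', hj⟩).1 else 0,
        ?_, ?_, ?_⟩
      invFun := fun B => ⟨fun i j => if hj : q j ≠ 0 then B.1 i (e ⟨j, hj⟩).1 else 0,
        ?_, ?_, ?_⟩
      left_inv := ?_
      right_inv := ?_ }
  · intro i j'
    beta_reduce
    by_cases hj : q' j' ≠ 0
    · rw [dif_pos hj]; exact A.2.1 _ _
    · rw [dif_neg hj]; exact Nat.zero_le 1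
  · intro i
    beta_reduce
    rw [rowsum_aux q q' e (A.1 i) (fun j hj => hzero A j hj i)]
    exact A.2.2.1 i
  · intro j'
    beta_reduce
    by_cases hj : q' j' ≠ 0
    · have : ∀ i, (if hj : q' j' ≠ 0 then A.1 i (e.symm ⟨j', hj⟩).1 else 0)
          = A.1 i (e.symm ⟨j', hj⟩).1 := fun i => dif_pos hj
      rw [Finset.sum_congr rfl (fun i _ => this i), A.2.2.2, hevq' ⟨j', hj⟩]
    · have : ∀ i, (if hj : q' j' ≠ 0 then A.1 i (e.symm ⟨j', hj⟩).1 else 0) = 0 :=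
        fun i => dif_neg hj
      rw [Finset.sum_congr rfl (fun i _ => this i), Finset.sum_const, smul_zero]
      omega
  · intro i j
    beta_reduce
    by_cases hj : q j ≠ 0
    · rw [dif_pos hj]; exact B.2.1 _ _
    · rw [dif_neg hj]; exact Nat.zero_le 1
  · intro i
    beta_reduce
    have h5 := rowsum_aux q' q e.symm (B.1 i) (fun j hj => hzero' B j hj i)
    simp only [Equiv.symm_symm] at h5
    rw [h5]
    exact B.2.2.1 i
  · intro j
    beta_reduce
    by_cases hj : q j ≠ 0
    · have : ∀ i, (if hj : q j ≠ 0 then B.1 i (e ⟨j, hj⟩).1 else 0)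
          = B.1 i (e ⟨j, hj⟩).1 := fun i => dif_pos hj
      rw [Finset.sum_congr rfl (fun i _ => this i), B.2.2.2, hevq ⟨j, hj⟩]
    · have : ∀ i, (if hj : q j ≠ 0 then B.1 i (e ⟨j, hj⟩).1 else 0) = 0 :=
        fun i => dif_neg hj
      rw [Finset.sum_congr rfl (fun i _ => this i), Finset.sum_const, smul_zero]
      omega
  · intro A
    apply Subtype.ext
    funext i j
    by_cases hj : q j ≠ 0
    · simp only [dif_pos hj]
      have hne : q' ((e ⟨j, hj⟩).1) ≠ 0 := by rw [hevq ⟨j, hj⟩]; exact hj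
      rw [dif_pos hne]
      have h1 : (⟨(e ⟨j, hj⟩).1, hne⟩ : {j : Fin n' // q' j ≠ 0}) = e ⟨j, hj⟩ := rfl
      rw [h1, Equiv.symm_apply_apply]
    · simp only [dif_neg hj]
      exact (hzero A j (not_not.1 hj) i).symm
  · intro B
    apply Subtype.ext
    funext i j'
    by_cases hj : q' j' ≠ 0
    · simp only [dif_pos hj]
      have hne : q ((e.symm ⟨j', hj⟩).1) ≠ 0 := by rw [hevq' ⟨j', hj⟩]; exact hj
      rw [dif_pos hne]
      have h1 : (⟨(e.symm ⟨j', hj⟩).1, hne⟩ : {j : Fin n // q j ≠ 0}) = e.symm ⟨j', hj⟩ := rfl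
      rw [h1, Equiv.apply_symm_apply]
    · simp only [dif_neg hj]
      exact (hzero' B j' (not_not.1 hj) i).symm
lemma binN_succ_row (m n : ℕ) (p : Fin (m + 1) → ℕ) (q : Fin n → ℕ) :
    binN (m + 1) n p q =
      ∑ S ∈ Finset.univ.filter (fun S : Finset (Fin n) => S.card = p 0 ∧ ∀ j ∈ S, q j ≠ 0),
        binN m n (fun i => p i.succ) (fun j => q j - if j ∈ S then 1 else 0) := by
  classical
  set T := {A : Fin (m+1) → Fin n → ℕ // (∀ i j, A i j ≤ 1) ∧
    (∀ i, ∑ j, A i j = p i) ∧ (∀ j, ∑ i, A i j = q j)} with hT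
  letI : Fintype T := Fintype.ofFinite _
  set h : T → Finset (Fin n) := fun A => Finset.univ.filter (fun j => A.1 0 j = 1) with hh
  have hrow : ∀ (A : T) (j : Fin n), A.1 0 j = if j ∈ h A then 1 else 0 := by
    intro A j
    by_cases hj : j ∈ h A
    · rw [if_pos hj]; exact (Finset.mem_filter.1 hj).2
    · rw [if_neg hj]
      have h1 : ¬ A.1 0 j = 1 := fun hc => hj (Finset.mem_filter.2 ⟨Finset.mem_univ j, hc⟩)
      have := A.2.1 0 j
      omega
  have hcard : ∀ A : T, (h A).card = p 0 := by
    intro A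
    have h1 : ∑ j, A.1 0 j = p 0 := A.2.2.1 0
    have h2 : ∑ j, A.1 0 j = (h A).card := by
      rw [Finset.sum_congr rfl (fun j _ => hrow A j)]
      simp [Finset.sum_ite_mem]
    omega
  have hmem : ∀ A : T, h A ∈ Finset.univ.filter
      (fun S : Finset (Fin n) => S.card = p 0 ∧ ∀ j ∈ S, q j ≠ 0) := by
    intro A
    refine Finset.mem_filter.2 ⟨Finset.mem_univ _, hcard A, ?_⟩
    intro j hj
    have h1 : A.1 0 j = 1 := (Finset.mem_filter.1 hj).2
    have h2 : A.1 0 j ≤ ∑ i, A.1 i j := Finset.single_le_sum (f := fun i => A.1 i j) (fun i _ => Nat.zero_le _) (Finset.mem_univ 0)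
    have h3 := A.2.2.2 j
    omega
  have key : binN (m+1) n p q = (Finset.univ : Finset T).card := by
    rw [binN, Nat.card_eq_fintype_card, ← Finset.card_univ]
  rw [key, Finset.card_eq_sum_card_fiberwise (fun A _ => hmem A)]
  apply Finset.sum_congr rfl
  intro S hS
  have hScard : S.card = p 0 := (Finset.mem_filter.1 hS).2.1
  have hSsupp : ∀ j ∈ S, q j ≠ 0 := (Finset.mem_filter.1 hS).2.2
  -- card of fiber = binN of reduced problem
  rw [binN]
  have : (Finset.filter (fun A : T => h A = S) Finset.univ).card
      = Nat.card {A : T // h A = S} := by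
    rw [Nat.card_eq_fintype_card, Fintype.card_subtype]
  rw [this]
  apply Nat.card_congr
  refine
    { toFun := fun A => ⟨fun i j => A.1.1 i.succ j, ?_, ?_, ?_⟩
      invFun := fun B => ⟨⟨fun i => Fin.cases (fun j => if j ∈ S then 1 else 0) (fun i' => B.1 i') i,
        ?_, ?_, ?_⟩, ?_⟩
      left_inv := ?_
      right_inv := ?_ }
  · intro i j; exact A.1.2.1 i.succ j
  · intro i; exact A.1.2.2.1 i.succ
  · intro j
    beta_reduce
    have h1 := A.1.2.2.2 j
    rw [Fin.sum_univ_succ] at h1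
    have h2 : A.1.1 0 j = if j ∈ S then 1 else 0 := by rw [hrow A.1 j, A.2]
    omega
  · intro i j
    induction i using Fin.cases with
    | zero => simp only [Fin.cases_zero]; split <;> omega
    | succ i' => simp only [Fin.cases_succ]; exact B.2.1 i' j
  · intro i
    induction i using Fin.cases with
    | zero =>
      simp only [Fin.cases_zero]
      rw [← hScard]
      simp [Finset.sum_ite_mem]
    | succ i' =>
      simp only [Fin.cases_succ]
      exact B.2.2.1 i'
  · intro j
    rw [Fin.sum_univ_succ]
    simp only [Fin.cases_zero, Fin.cases_succ]
    have h1 := B.2.2.2 j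
    have h2 : (if j ∈ S then 1 else 0) ≤ q j := by
      split
      · have := hSsupp j (by assumption); omega
      · omega
    omega
  · -- membership : filter of reconstructed = S
    apply Finset.ext
    intro j
    simp only [hh, Finset.mem_filter, Finset.mem_univ, true_and, Fin.cases_zero]
    by_cases hjS : j ∈ S <;> simp_all
  · intro A
    apply Subtype.ext
    apply Subtype.ext
    funext i j
    induction i using Fin.cases with
    | zero =>
      simp only [Fin.cases_zero]
      rw [hrow A.1 j, A.2]
    | succ i' => simp only [Fin.cases_succ]
  · intro B
    apply Subtype.ext
    funext i j
    simp only [Fin.cases_succ]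
lemma fiber_card {n K : ℕ} (q : Fin n → ℕ) (hK : ∀ j, q j ≤ K) (S : Finset (Fin n))
    (hS : ∀ j ∈ S, q j ≠ 0) :
    S.card = ∑ k ∈ Finset.range K, (S.filter fun j => q j = k + 1).card := by
  classical
  rw [Finset.card_eq_sum_card_fiberwise (f := fun j => q j)
    (t := (Finset.range K).image (· + 1)) (fun j hj => by
      refine Finset.mem_image.2 ⟨q j - 1, Finset.mem_range.2 ?_, ?_⟩
      · have := hK j; have := hS j hj; omega
      · have := hS j hj; show q j - 1 + 1 = q j; omega)]
  rw [Finset.sum_image (by intro a _ b _ h; simp only at h; omega)]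

lemma count_lemma {n K : ℕ} (q : Fin n → ℕ) (hK : ∀ j, q j ≤ K) (c : ℕ) (s : ℕ → ℕ)
    (hs : ∀ k, s k ≤ countVec q k) (hsum : ∑ k ∈ Finset.range K, s k = c)
    (T : Finset (Finset (Fin n)))
    (hT : ∀ S : Finset (Fin n), S ∈ T ↔ (S.card = c ∧ ∀ j ∈ S, q j ≠ 0) ∧
        ∀ k, (S.filter fun j => q j = k + 1).card = s k) :
    T.card = ∏ k ∈ Finset.range K, (countVec q k).choose (s k) := by
  classical
  set F : ℕ → Finset (Fin n) := fun k => Finset.univ.filter (fun j => q j = k + 1) with hF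
  set D := (Finset.range K).pi (fun k => (F k).powersetCard (s k)) with hD
  have hcardD : D.card = ∏ k ∈ Finset.range K, (countVec q k).choose (s k) := by
    rw [hD, Finset.card_pi]
    apply Finset.prod_congr rfl
    intro k _
    rw [Finset.card_powersetCard]
    rfl
  rw [← hcardD]
  apply Finset.card_bij' (i := fun S _ => fun k _ => S.filter (fun j => q j = k + 1))
    (j := fun f _ => (Finset.range K).attach.biUnion (fun k => f k.1 k.2))
  -- hi : forward maps into D
  · intro S hS
    obtain ⟨⟨hcard, hsupp⟩, hsig⟩ := (hT S).1 hS
    rw [hD, Finset.mem_pi]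
    intro k hk
    rw [Finset.mem_powersetCard]
    constructor
    · exact Finset.filter_subset_filter _ (Finset.subset_univ S)
    · exact hsig k
  -- hj : backward maps into source
  · intro f hf
    rw [hD, Finset.mem_pi] at hf
    have hsub : ∀ (k) (hk : k ∈ Finset.range K), f k hk ⊆ F k ∧ (f k hk).card = s k := by
      intro k hk
      exact Finset.mem_powersetCard.1 (hf k hk)
    set Sf := (Finset.range K).attach.biUnion (fun k => f k.1 k.2) with hSf
    have hmem' : ∀ j, j ∈ Sf ↔ ∃ (k : ℕ) (hk : k ∈ Finset.range K), j ∈ f k hk := by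
      intro j
      rw [hSf, Finset.mem_biUnion]
      constructor
      · rintro ⟨⟨k, hk⟩, -, hj⟩; exact ⟨k, hk, hj⟩
      · rintro ⟨k, hk, hj⟩; exact ⟨⟨k, hk⟩, Finset.mem_attach _ _, hj⟩
    have hval : ∀ (j) (k) (hk : k ∈ Finset.range K), j ∈ f k hk → q j = k + 1 := by
      intro j k hk hj
      have := (hsub k hk).1 hj
      rw [hF] at this
      exact (Finset.mem_filter.1 this).2
    have hfib : ∀ k (hk : k ∈ Finset.range K), Sf.filter (fun j => q j = k + 1) = f k hk := by
      intro k hk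
      apply Finset.ext
      intro j
      rw [Finset.mem_filter, hmem' j]
      constructor
      · rintro ⟨⟨k', hk', hj⟩, hq⟩
        have := hval j k' hk' hj
        have : k' = k := by omega
        subst this; exact hj
      · intro hj
        exact ⟨⟨k, hk, hj⟩, hval j k hk hj⟩
    have hfib0 : ∀ k, k ∉ Finset.range K → Sf.filter (fun j => q j = k + 1) = ∅ := by
      intro k hk
      apply Finset.eq_empty_of_forall_notMem
      intro j hj
      obtain ⟨hj1, hj2⟩ := Finset.mem_filter.1 hj
      have := hK j
      rw [Finset.mem_range] at hk
      omega
    have hsupp : ∀ j ∈ Sf, q j ≠ 0 := by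
      intro j hj
      obtain ⟨k, hk, hjk⟩ := (hmem' j).1 hj
      have := hval j k hk hjk
      omega
    refine (hT _).2 ⟨⟨?_, hsupp⟩, ?_⟩
    · rw [fiber_card q hK Sf hsupp, ← hsum]
      apply Finset.sum_congr rfl
      intro k hk
      rw [hfib k hk, (hsub k hk).2]
    · intro k
      by_cases hk : k ∈ Finset.range K
      · rw [hfib k hk, (hsub k hk).2]
      · rw [hfib0 k hk]
        have h0 : countVec q k = 0 := by
          rw [countVec, Finset.card_eq_zero]
          apply Finset.eq_empty_of_forall_notMem
          intro j hj
          have := (Finset.mem_filter.1 hj).2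
          have := hK j
          rw [Finset.mem_range] at hk
          omega
        have := hs k
        simp only [Finset.card_empty]
        omega
  -- left inverse : j (i S) = S  (i.e. biUnion of fibers = S)
  · intro S hS
    obtain ⟨hcard, hsupp⟩ := ((hT S).1 hS).1
    apply Finset.ext
    intro j
    rw [Finset.mem_biUnion]
    constructor
    · rintro ⟨⟨k, hk⟩, -, hj⟩
      exact (Finset.mem_filter.1 hj).1
    · intro hj
      refine ⟨⟨q j - 1, Finset.mem_range.2 ?_⟩, Finset.mem_attach _ _, ?_⟩
      · have := hK j; have := hsupp j hj; omega
      · refine Finset.mem_filter.2 ⟨hj, ?_⟩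
        have := hsupp j hj; show q j = q j - 1 + 1; omega
  -- right inverse : i (j f) = f
  · intro f hf
    rw [hD, Finset.mem_pi] at hf
    have hsub : ∀ (k) (hk : k ∈ Finset.range K), f k hk ⊆ F k ∧ (f k hk).card = s k := by
      intro k hk
      exact Finset.mem_powersetCard.1 (hf k hk)
    funext k hk
    -- goal: (biUnion ...).filter (q = k+1) = f k hk
    have hval : ∀ (j) (k') (hk' : k' ∈ Finset.range K), j ∈ f k' hk' → q j = k' + 1 := by
      intro j k' hk' hj
      have := (hsub k' hk').1 hj
      rw [hF] at this
      exact (Finset.mem_filter.1 this).2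
    apply Finset.ext
    intro j
    rw [Finset.mem_filter, Finset.mem_biUnion]
    constructor
    · rintro ⟨⟨⟨k', hk'⟩, -, hj⟩, hq⟩
      have := hval j k' hk' hj
      have : k' = k := by omega
      subst this; exact hj
    · intro hj
      exact ⟨⟨⟨k, hk⟩, Finset.mem_attach _ _, hj⟩, hval j k hk hj⟩
lemma countVec_sub {n : ℕ} (q : Fin n → ℕ) (S : Finset (Fin n))
    (hsupp : ∀ j ∈ S, q j ≠ 0) (k : ℕ) :
    countVec (fun j => q j - if j ∈ S then 1 else 0) k
      = (countVec q k - (S.filter fun j => q j = k + 1).card)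
        + (S.filter fun j => q j = k + 2).card := by
  classical
  rw [countVec]
  show (Finset.univ.filter fun j => q j - (if j ∈ S then 1 else 0) = k + 1).card = _
  have hP : (fun j => q j - (if j ∈ S then 1 else 0) = k + 1) = (fun j : Fin n => q j - (if j ∈ S then 1 else 0) = k + 1) := rfl
  set P : Fin n → Prop := fun j => q j - (if j ∈ S then 1 else 0) = k + 1 with hPdef
  rw [show (Finset.univ.filter fun j => q j - (if j ∈ S then 1 else 0) = k + 1) = Finset.univ.filter P from rfl]
  have hsplit := Finset.card_filter_add_card_filter_not
    (s := Finset.univ.filter P) (p := fun j => j ∈ S)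
  have h1 : (Finset.univ.filter P).filter (fun j => j ∈ S) = S.filter (fun j => q j = k + 2) := by
    apply Finset.ext
    intro j
    simp only [Finset.mem_filter, Finset.mem_univ, true_and, hPdef]
    constructor
    · rintro ⟨h2, h3⟩
      rw [if_pos h3] at h2
      have := hsupp j h3
      exact ⟨h3, by omega⟩
    · rintro ⟨h3, h2⟩
      rw [if_pos h3]
      exact ⟨by omega, h3⟩
  have h2 : (Finset.univ.filter P).filter (fun j => ¬ j ∈ S)
      = (Finset.univ.filter fun j => q j = k + 1) \ (S.filter fun j => q j = k + 1) := by
    apply Finset.ext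
    intro j
    simp only [Finset.mem_filter, Finset.mem_univ, true_and, Finset.mem_sdiff, hP]
    constructor
    · rintro ⟨h3, h4⟩
      have h3' : q j - (if j ∈ S then 1 else 0) = k + 1 := h3
      rw [if_neg h4] at h3'
      exact ⟨by omega, fun hc => h4 hc.1⟩
    · rintro ⟨h3, h4⟩
      have h5 : j ∉ S := fun hc => h4 ⟨hc, h3⟩
      refine ⟨?_, h5⟩
      show q j - (if j ∈ S then 1 else 0) = k + 1
      rw [if_neg h5]
      omega
  have h3 : ((Finset.univ.filter fun j => q j = k + 1) \ (S.filter fun j => q j = k + 1)).card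
      = countVec q k - (S.filter fun j => q j = k + 1).card := by
    rw [Finset.card_sdiff_of_subset (Finset.filter_subset_filter _ (Finset.subset_univ S))]
    rfl
  have hle : (S.filter fun j => q j = k + 1).card ≤ countVec q k :=
    Finset.card_le_card (Finset.filter_subset_filter _ (Finset.subset_univ S))
  rw [h1, h2, h3] at hsplit
  omega

theorem stmt0 (m n : ℕ) (p : Fin (m + 1) → ℕ) (q : Fin n → ℕ)
    (r : ℕ → ℕ) (hr : ∀ k, r k = countVec q k)
    (ns : (ℕ → ℕ) → ℕ) (qs : ∀ s : ℕ → ℕ, Fin (ns s) → ℕ)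
    (hqs : ∀ s : ℕ → ℕ, (∀ k, s k ≤ r k) → (∑ᶠ k, s k) = p 0 →
      ∀ k, (countVec (qs s) k : ℤ) = (r k : ℤ) - s k + s (k + 1)) :
    binN (m + 1) n p q =
      ∑ᶠ s ∈ {s : ℕ → ℕ | (∀ k, s k ≤ r k) ∧ (∑ᶠ k, s k) = p 0},
        (∏ᶠ k, (r k).choose (s k)) * binN m (ns s) (fun i => p i.succ) (qs s) := by
  classical
  set K := Finset.univ.sup q with hKdef
  have hK : ∀ j, q j ≤ K := fun j => Finset.le_sup (Finset.mem_univ j)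
  have hrK : ∀ k, K ≤ k → r k = 0 := by
    intro k hk
    rw [hr, countVec, Finset.card_eq_zero]
    apply Finset.eq_empty_of_forall_notMem
    intro j hj
    have := (Finset.mem_filter.1 hj).2
    have := hK j
    omega
  set 𝒮 := Finset.univ.filter
    (fun S : Finset (Fin n) => S.card = p 0 ∧ ∀ j ∈ S, q j ≠ 0) with h𝒮
  set sig : Finset (Fin n) → (ℕ → ℕ) := fun S k => (S.filter fun j => q j = k + 1).card
    with hsig
  have hsigle : ∀ (S : Finset (Fin n)) (k : ℕ), sig S k ≤ r k := by
    intro S k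
    rw [hr, countVec]
    exact Finset.card_le_card (Finset.filter_subset_filter _ (Finset.subset_univ S))
  have hsig_supp : ∀ S : Finset (Fin n), Function.support (sig S) ⊆ ↑(Finset.range K) := by
    intro S k hk
    simp only [Function.mem_support] at hk
    have : (S.filter fun j => q j = k + 1).Nonempty := Finset.card_pos.1 (Nat.pos_of_ne_zero hk)
    obtain ⟨j, hj⟩ := this
    have := (Finset.mem_filter.1 hj).2
    have := hK j
    simp only [Finset.coe_range, Set.mem_Iio]
    omega
  have hsigV : ∀ S ∈ 𝒮, (∀ k, sig S k ≤ r k) ∧ (∑ᶠ k, sig S k) = p 0 := by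
    intro S hS
    obtain ⟨-, hcard, hsupp⟩ := Finset.mem_filter.1 hS
    refine ⟨fun k => hsigle S k, ?_⟩
    rw [finsum_eq_finset_sum_of_support_subset _ (hsig_supp S)]
    rw [← fiber_card q hK S hsupp]
    exact hcard
  -- sum over range K of s equals p 0 for valid s
  have hssum : ∀ s : ℕ → ℕ, (∀ k, s k ≤ r k) → (∑ᶠ k, s k) = p 0 →
      ∑ k ∈ Finset.range K, s k = p 0 := by
    intro s hs hsum
    rw [← hsum]
    symm
    apply finsum_eq_finset_sum_of_support_subset
    intro k hk
    simp only [Function.mem_support] at hk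
    simp only [Finset.coe_range, Set.mem_Iio]
    by_contra hc
    have := hrK k (by omega)
    have := hs k
    omega
  -- the count of fibers
  have hcount : ∀ s : ℕ → ℕ, (∀ k, s k ≤ r k) → (∑ᶠ k, s k) = p 0 →
      (𝒮.filter fun S => sig S = s).card = ∏ k ∈ Finset.range K, (r k).choose (s k) := by
    intro s hs hsum
    have := count_lemma q hK (p 0) s (fun k => by rw [← hr]; exact hs k)
      (hssum s hs hsum) (𝒮.filter fun S => sig S = s) ?_
    · rw [this]
      apply Finset.prod_congr rfl
      intro k _
      rw [hr]
    · intro S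
      rw [Finset.mem_filter, h𝒮, Finset.mem_filter]
      constructor
      · rintro ⟨⟨-, h1⟩, h2⟩
        exact ⟨h1, fun k => congrFun h2 k⟩
      · rintro ⟨h1, h2⟩
        exact ⟨⟨Finset.mem_univ _, h1⟩, funext h2⟩
  have hchoose : ∀ s : ℕ → ℕ, (∀ k, s k ≤ r k) →
      (∏ᶠ k, (r k).choose (s k)) = ∏ k ∈ Finset.range K, (r k).choose (s k) := by
    intro s hs
    apply finprod_eq_finset_prod_of_mulSupport_subset
    intro k hk
    simp only [Function.mem_mulSupport] at hk
    simp only [Finset.coe_range, Set.mem_Iio]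
    by_contra hc
    have h0 := hrK k (by omega)
    have h1 := hs k
    apply hk
    rw [h0]
    have : s k = 0 := by omega
    rw [this]
    rfl
  set Vfin : Finset (ℕ → ℕ) := 𝒮.image sig with hVfin
  have hVeq : {s : ℕ → ℕ | (∀ k, s k ≤ r k) ∧ (∑ᶠ k, s k) = p 0} = ↑Vfin := by
    apply Set.ext
    intro s
    simp only [Set.mem_setOf_eq, hVfin, Finset.coe_image, Set.mem_image, Finset.mem_coe]
    constructor
    · rintro ⟨hs, hsum⟩
      have hpos : 0 < (𝒮.filter fun S => sig S = s).card := by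
        rw [hcount s hs hsum]
        apply Finset.prod_pos
        intro k _
        exact Nat.choose_pos (hs k)
      obtain ⟨S, hS⟩ := Finset.card_pos.1 hpos
      obtain ⟨hS1, hS2⟩ := Finset.mem_filter.1 hS
      exact ⟨S, hS1, hS2⟩
    · rintro ⟨S, hS, rfl⟩
      exact hsigV S hS
  rw [binN_succ_row m n p q, hVeq, finsum_mem_coe_finset]
  rw [← Finset.sum_fiberwise_of_maps_to (g := sig) (t := Vfin)
    (fun S hS => Finset.mem_image_of_mem sig hS)
    (fun S => binN m n (fun i => p i.succ) (fun j => q j - if j ∈ S then 1 else 0))]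
  apply Finset.sum_congr rfl
  intro s hsV
  obtain ⟨S₀, hS₀, rfl⟩ := Finset.mem_image.1 hsV
  obtain ⟨hle, hsum⟩ := hsigV S₀ hS₀
  set s := sig S₀ with hs_def
  have hinner : ∀ S ∈ 𝒮.filter (fun S => sig S = s),
      binN m n (fun i => p i.succ) (fun j => q j - if j ∈ S then 1 else 0)
        = binN m (ns s) (fun i => p i.succ) (qs s) := by
    intro S hS
    obtain ⟨hS1, hS2⟩ := Finset.mem_filter.1 hS
    obtain ⟨-, hcard, hsupp⟩ := Finset.mem_filter.1 hS1
    apply binN_congr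
    intro k
    have h1 := countVec_sub q S hsupp k
    have h2 : (S.filter fun j => q j = k + 1).card = s k := congrFun hS2 k
    have h3 : (S.filter fun j => q j = k + 2).card = s (k + 1) := congrFun hS2 (k + 1)
    have h4 := hqs s hle hsum k
    have h5 : s k ≤ r k := hle k
    rw [h1, h2, h3, ← hr k] at *
    omega
  rw [Finset.sum_congr rfl hinner, Finset.sum_const, smul_eq_mul]
  rw [hcount s hle hsum, hchoose s hle]
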